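/- For the semi-coupling formulation of WFR between discrete measures, splitting the masses as αᵢⱼ with Σⱼαᵢⱼ = μᵢ and βⱼᵢ with Σᵢβⱼᵢ = νⱼ, the total cost Σᵢⱼ WFR_η²(αᵢⱼδ_{xᵢ}, βⱼᵢδ_{yⱼ}) is always at least WFR_η²(μ, ν) defined via the KL-relaxed primal problem (Theorem 3.3), i.e., the semi-coupling value upper-bounds the KL-primal value. -/

import Mathlib

noncomputable def cosPlus (x : ℝ) : ℝ :=
  if x ∈ Set.Icc (-(Real.pi / 2)) (Real.pi / 2) then Real.cos x else 0

noncomputable def klR (r h : ℝ) : ℝ := r * Real.log (r / h) - r + h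

noncomputable def wfrCost {n : ℕ} (η : ℝ) (x y : EuclideanSpace ℝ (Fin n)) : EReal :=
  if cosPlus (‖x - y‖ / (2 * η)) = 0 then ⊤
  else ((-2 * Real.log (cosPlus (‖x - y‖ / (2 * η))) : ℝ) : EReal)

noncomputable def wfrSq {n I J : ℕ} (η : ℝ) (μ : Fin I → ℝ) (x : Fin I → EuclideanSpace ℝ (Fin n))
    (ν : Fin J → ℝ) (y : Fin J → EuclideanSpace ℝ (Fin n)) : EReal :=
  ((2 * η ^ 2 : ℝ) : EReal) *
    sInf {v : EReal | ∃ R : Fin I → Fin J → ℝ, (∀ i j, 0 ≤ R i j) ∧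
      v = (∑ i, ∑ j, wfrCost η (x i) (y j) * ((R i j : ℝ) : EReal)) +
        ((∑ i, klR (∑ j, R i j) (μ i) + ∑ j, klR (∑ i, R i j) (ν j) : ℝ) : EReal)}

/-- Squared WFR distance between two Diracs (explicit formula). -/
noncomputable def wfrDiracSq {n : ℕ} (η h₀ h₁ : ℝ) (x y : EuclideanSpace ℝ (Fin n)) : ℝ :=
  2 * η ^ 2 * (h₀ + h₁ - 2 * Real.sqrt (h₀ * h₁) * cosPlus (‖x - y‖ / (2 * η)))

lemma cosPlus_nonneg (t : ℝ) : 0 ≤ cosPlus t := by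
  unfold cosPlus
  split
  · exact Real.cos_nonneg_of_mem_Icc ‹_›
  · exact le_rfl

lemma ereal_coe_sum {ι : Type*} (s : Finset ι) (f : ι → ℝ) :
    ((∑ i ∈ s, f i : ℝ) : EReal) = ∑ i ∈ s, ((f i : ℝ) : EReal) :=
  map_sum (⟨⟨Real.toEReal, EReal.coe_zero⟩, EReal.coe_add⟩ : ℝ →+ EReal) f s

lemma klR_zero_left (h : ℝ) : klR 0 h = h := by simp [klR]

/-- key scalar inequality towards the log-sum inequality -/
lemma logsum_key (a b s t : ℝ) (ha : 0 ≤ a) (hb : 0 < b) (hs : 0 < s) (ht : 0 < t) :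
    a - b * (s / t) ≤ a * Real.log (a / b) - a * Real.log (s / t) := by
  rcases ha.eq_or_lt with h | h
  · rw [← h]
    simp only [zero_sub, zero_mul, sub_zero, neg_nonpos, sub_self]
    positivity
  · have hu : 0 < a / b := by positivity
    have hv : 0 < s / t := by positivity
    have h1 : Real.log ((s / t) / (a / b)) ≤ (s / t) / (a / b) - 1 :=
      Real.log_le_sub_one_of_pos (by positivity)
    rw [Real.log_div hv.ne' hu.ne'] at h1
    have h3 : a * (Real.log (s / t) - Real.log (a / b)) ≤ a * ((s / t) / (a / b) - 1) :=
      mul_le_mul_of_nonneg_left h1 h.le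
    have h4 : a * ((s / t) / (a / b) - 1) = b * (s / t) - a := by
      field_simp
    rw [h4] at h3
    nlinarith [h3, mul_sub a (Real.log (s / t)) (Real.log (a / b))]

/-- two-point log-sum inequality -/
lemma logsum2 (a b c d : ℝ) (ha : 0 ≤ a) (hc : 0 ≤ c) (hb : 0 < b) (hd : 0 < d) :
    (a + c) * Real.log ((a + c) / (b + d)) ≤ a * Real.log (a / b) + c * Real.log (c / d) := by
  rcases eq_or_lt_of_le (by linarith : (0:ℝ) ≤ a + c) with hs | hs
  · have ha0 : a = 0 := by linarith
    have hc0 : c = 0 := by linarith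
    simp [ha0, hc0]
  · have ht : (0:ℝ) < b + d := by linarith
    have h1 := logsum_key a b (a + c) (b + d) ha hb hs ht
    have h2 := logsum_key c d (a + c) (b + d) hc hd hs ht
    have hts : b * ((a + c) / (b + d)) + d * ((a + c) / (b + d)) = a + c := by
      field_simp
    have hsplit : (a + c) * Real.log ((a + c) / (b + d)) =
        a * Real.log ((a + c) / (b + d)) + c * Real.log ((a + c) / (b + d)) := by ring
    linarith

lemma klR_add_le (a b c d : ℝ) (ha : 0 ≤ a) (hb : 0 ≤ b) (hc : 0 ≤ c) (hd : 0 ≤ d)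
    (hab : b = 0 → a = 0) (hcd : d = 0 → c = 0) :
    klR (a + c) (b + d) ≤ klR a b + klR c d := by
  unfold klR
  suffices h : (a + c) * Real.log ((a + c) / (b + d)) ≤
      a * Real.log (a / b) + c * Real.log (c / d) by linarith
  rcases hb.eq_or_lt with hb0 | hb0
  · have ha0 : a = 0 := hab hb0.symm
    simp [ha0, ← hb0]
  · rcases hd.eq_or_lt with hd0 | hd0
    · have hc0 : c = 0 := hcd hd0.symm
      simp [hc0, ← hd0]
    · exact logsum2 a b c d ha hc hb0 hd0

lemma klR_sum_le {ι : Type*} (s : Finset ι) (r h : ι → ℝ) :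
    (∀ i ∈ s, 0 ≤ r i) → (∀ i ∈ s, 0 ≤ h i) → (∀ i ∈ s, h i = 0 → r i = 0) →
    klR (∑ i ∈ s, r i) (∑ i ∈ s, h i) ≤ ∑ i ∈ s, klR (r i) (h i) := by
  induction s using Finset.cons_induction with
  | empty => intro _ _ _; simp [klR]
  | cons i s hi ih =>
    intro hr hh h0
    rw [Finset.sum_cons, Finset.sum_cons, Finset.sum_cons]
    have hmem : ∀ j ∈ s, j ∈ Finset.cons i s hi := fun j hj => Finset.mem_cons.2 (Or.inr hj)
    have hself : i ∈ Finset.cons i s hi := Finset.mem_cons_self i s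
    have hrs : 0 ≤ ∑ j ∈ s, r j := Finset.sum_nonneg fun j hj => hr j (hmem j hj)
    have hhs : 0 ≤ ∑ j ∈ s, h j := Finset.sum_nonneg fun j hj => hh j (hmem j hj)
    have h0s : (∑ j ∈ s, h j) = 0 → (∑ j ∈ s, r j) = 0 := by
      intro hz
      have hall : ∀ j ∈ s, h j = 0 :=
        (Finset.sum_eq_zero_iff_of_nonneg (fun j hj => hh j (hmem j hj))).1 hz
      exact Finset.sum_eq_zero fun j hj => h0 j (hmem j hj) (hall j hj)
    calc klR (r i + ∑ j ∈ s, r j) (h i + ∑ j ∈ s, h j)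
        ≤ klR (r i) (h i) + klR (∑ j ∈ s, r j) (∑ j ∈ s, h j) :=
          klR_add_le _ _ _ _ (hr i hself) (hh i hself) hrs hhs (h0 i hself) h0s
      _ ≤ klR (r i) (h i) + ∑ j ∈ s, klR (r j) (h j) :=
          add_le_add_right (ih (fun j hj => hr j (hmem j hj)) (fun j hj => hh j (hmem j hj))
            (fun j hj => h0 j (hmem j hj))) _

/-- pointwise Dirac identity/inequality -/
lemma pointwise_aux (a b cc : ℝ) (ha : 0 ≤ a) (hb : 0 ≤ b) (hcc : 0 ≤ cc) :
    -2 * Real.log cc * (Real.sqrt (a * b) * cc) + klR (Real.sqrt (a * b) * cc) a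
      + klR (Real.sqrt (a * b) * cc) b ≤ a + b - 2 * Real.sqrt (a * b) * cc := by
  rcases hcc.eq_or_lt with h | h
  · simp [← h, klR_zero_left]
  · rcases (mul_nonneg ha hb).eq_or_lt with hab | hab
    · rw [← hab]
      simp [klR_zero_left]
    · have ha' : 0 < a := by
        rcases ha.eq_or_lt with h' | h'
        · rw [← h', zero_mul] at hab; exact absurd hab (lt_irrefl 0)
        · exact h'
      have hb' : 0 < b := by
        rcases hb.eq_or_lt with h' | h'
        · rw [← h', mul_zero] at hab; exact absurd hab (lt_irrefl 0)
        · exact h'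
      set r := Real.sqrt (a * b) * cc with hr
      have hsr : 0 < Real.sqrt (a * b) := Real.sqrt_pos.2 hab
      have hrr : 0 < r := mul_pos hsr h
      have hsq : Real.sqrt (a * b) * Real.sqrt (a * b) = a * b :=
        Real.mul_self_sqrt (le_of_lt hab)
      have hrsq : r * r = (a * b) * cc ^ 2 := by
        rw [hr, mul_mul_mul_comm, hsq]; ring
      have hprod : (r / a) * (r / b) = cc ^ 2 := by
        rw [div_mul_div_comm, hrsq, mul_comm (a * b) (cc ^ 2), mul_div_assoc,
          div_self hab.ne', mul_one]
      have hlog : Real.log (r / a) + Real.log (r / b) = 2 * Real.log cc := by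
        rw [← Real.log_mul (ne_of_gt (show (0:ℝ) < r / a by positivity))
          (ne_of_gt (show (0:ℝ) < r / b by positivity)), hprod,
          show cc ^ 2 = cc * cc by ring, Real.log_mul h.ne' h.ne']
        ring
      have hcomb : r * Real.log (r / a) + r * Real.log (r / b) = 2 * Real.log cc * r := by
        rw [← mul_add, hlog]; ring
      have h2r : 2 * Real.sqrt (a * b) * cc = 2 * r := by rw [hr]; ring
      simp only [klR]
      linarith [hcomb, h2r]

theorem wfr_semicoupling_upper_bound {n I J : ℕ} (η : ℝ) (hη : 0 < η)
    (μ : Fin I → ℝ) (x : Fin I → EuclideanSpace ℝ (Fin n))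
    (ν : Fin J → ℝ) (y : Fin J → EuclideanSpace ℝ (Fin n))
    (hμ : ∀ i, 0 < μ i) (hν : ∀ j, 0 < ν j)
    (α : Fin I → Fin J → ℝ) (β : Fin J → Fin I → ℝ)
    (hα : ∀ i j, 0 ≤ α i j) (hβ : ∀ j i, 0 ≤ β j i)
    (hαsum : ∀ i, ∑ j, α i j = μ i) (hβsum : ∀ j, ∑ i, β j i = ν j) :
    wfrSq η μ x ν y ≤
      ((∑ i, ∑ j, wfrDiracSq η (α i j) (β j i) (x i) (y j) : ℝ) : EReal) := by
  set RR : Fin I → Fin J → ℝ :=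
    fun i j => Real.sqrt (α i j * β j i) * cosPlus (‖x i - y j‖ / (2 * η)) with hRR
  have hRnn : ∀ i j, 0 ≤ RR i j := fun i j =>
    mul_nonneg (Real.sqrt_nonneg _) (cosPlus_nonneg _)
  set A : ℝ := ∑ i, ∑ j, -2 * Real.log (cosPlus (‖x i - y j‖ / (2 * η))) * RR i j with hA
  set K : ℝ := (∑ i, klR (∑ j, RR i j) (μ i)) + ∑ j, klR (∑ i, RR i j) (ν j) with hKdef
  have hterm : ∀ i j, wfrCost η (x i) (y j) * ((RR i j : ℝ) : EReal) =
      ((-2 * Real.log (cosPlus (‖x i - y j‖ / (2 * η))) * RR i j : ℝ) : EReal) := by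
    intro i j
    by_cases h : cosPlus (‖x i - y j‖ / (2 * η)) = 0
    · have hz : RR i j = 0 := by simp [hRR, h]
      rw [hz]
      simp only [wfrCost]
      rw [if_pos h]
      simp
    · simp only [wfrCost]
      rw [if_neg h, ← EReal.coe_mul]
  have hmem : ((A + K : ℝ) : EReal) ∈ {v : EReal | ∃ R : Fin I → Fin J → ℝ,
      (∀ i j, 0 ≤ R i j) ∧
      v = (∑ i, ∑ j, wfrCost η (x i) (y j) * ((R i j : ℝ) : EReal)) +
        ((∑ i, klR (∑ j, R i j) (μ i) + ∑ j, klR (∑ i, R i j) (ν j) : ℝ) : EReal)} := by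
    refine ⟨RR, hRnn, ?_⟩
    rw [EReal.coe_add]
    congr 1
    rw [hA, ereal_coe_sum]
    refine Finset.sum_congr rfl fun i _ => ?_
    rw [ereal_coe_sum]
    exact Finset.sum_congr rfl fun j _ => (hterm i j).symm
  unfold wfrSq
  refine le_trans (mul_le_mul_of_nonneg_left (sInf_le hmem)
    (EReal.coe_nonneg.2 (by positivity))) ?_
  rw [← EReal.coe_mul, EReal.coe_le_coe_iff]
  -- now a purely real inequality
  have hpt : ∀ i j, -2 * Real.log (cosPlus (‖x i - y j‖ / (2 * η))) * RR i j
      + klR (RR i j) (α i j) + klR (RR i j) (β j i)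
      ≤ α i j + β j i
        - 2 * Real.sqrt (α i j * β j i) * cosPlus (‖x i - y j‖ / (2 * η)) := by
    intro i j
    simpa only [hRR] using
      pointwise_aux (α i j) (β j i) (cosPlus (‖x i - y j‖ / (2 * η)))
        (hα i j) (hβ j i) (cosPlus_nonneg _)
  have hK1 : ∀ i, klR (∑ j, RR i j) (μ i) ≤ ∑ j, klR (RR i j) (α i j) := by
    intro i
    rw [← hαsum i]
    exact klR_sum_le Finset.univ _ _ (fun j _ => hRnn i j) (fun j _ => hα i j)
      (fun j _ hz => by simp [hRR, hz])
  have hK2 : ∀ j, klR (∑ i, RR i j) (ν j) ≤ ∑ i, klR (RR i j) (β j i) := by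
    intro j
    rw [← hβsum j]
    exact klR_sum_le Finset.univ _ _ (fun i _ => hRnn i j) (fun i _ => hβ j i)
      (fun i _ hz => by simp [hRR, hz])
  have hKle : K ≤ (∑ i, ∑ j, klR (RR i j) (α i j)) + ∑ i, ∑ j, klR (RR i j) (β j i) := by
    rw [hKdef]
    refine add_le_add (Finset.sum_le_sum fun i _ => hK1 i) ?_
    calc (∑ j, klR (∑ i, RR i j) (ν j)) ≤ ∑ j, ∑ i, klR (RR i j) (β j i) :=
          Finset.sum_le_sum fun j _ => hK2 j
      _ = ∑ i, ∑ j, klR (RR i j) (β j i) := Finset.sum_comm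
  have hcollect : ∀ (f g h : Fin I → Fin J → ℝ),
      (∑ i, ∑ j, f i j) + ((∑ i, ∑ j, g i j) + (∑ i, ∑ j, h i j))
        = ∑ i, ∑ j, (f i j + g i j + h i j) := by
    intro f g h
    rw [← Finset.sum_add_distrib, ← Finset.sum_add_distrib]
    refine Finset.sum_congr rfl fun i _ => ?_
    rw [← Finset.sum_add_distrib, ← Finset.sum_add_distrib]
    exact Finset.sum_congr rfl fun j _ => by ring
  have hreal : A + K ≤ ∑ i, ∑ j, (α i j + β j i
      - 2 * Real.sqrt (α i j * β j i) * cosPlus (‖x i - y j‖ / (2 * η))) := by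
    calc A + K ≤ A + ((∑ i, ∑ j, klR (RR i j) (α i j))
          + ∑ i, ∑ j, klR (RR i j) (β j i)) := by linarith
      _ = ∑ i, ∑ j, (-2 * Real.log (cosPlus (‖x i - y j‖ / (2 * η))) * RR i j
          + klR (RR i j) (α i j) + klR (RR i j) (β j i)) := by
            rw [hA, hcollect]
      _ ≤ _ := Finset.sum_le_sum fun i _ => Finset.sum_le_sum fun j _ => hpt i j
  calc (2 * η ^ 2) * (A + K)
      ≤ (2 * η ^ 2) * ∑ i, ∑ j, (α i j + β j i
          - 2 * Real.sqrt (α i j * β j i) * cosPlus (‖x i - y j‖ / (2 * η))) :=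
        mul_le_mul_of_nonneg_left hreal (by positivity)
    _ = ∑ i, ∑ j, wfrDiracSq η (α i j) (β j i) (x i) (y j) := by
        simp only [wfrDiracSq, Finset.mul_sum]
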